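/- arXiv:2212.12100 — 2 statements merged into one kernel-verified Lean document; each statement's English description precedes it below -/
import Mathlib

section
/- If P = {x ∈ X : ⟨x_i*, x⟩ ≤ α_i, i = 1,…,m} is a polyhedral convex set and x̄ ∈ P, then N(x̄; P) = cone{x_i* : i ∈ I(x̄)}, where I(x̄) = {i : ⟨x_i*, x̄⟩ = α_i} is the active index set. -/
open Set Pointwise

def IsPolyhedral {X : Type*} [AddCommGroup X] [Module ℝ X] [TopologicalSpace X]
    (P : Set X) : Prop :=
  ∃ (m : ℕ) (f : Fin m → X →L[ℝ] ℝ) (α : Fin m → ℝ),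
    P = {x : X | ∀ i, f i x ≤ α i}

def IsGPolyhedral {X : Type*} [AddCommGroup X] [Module ℝ X] [TopologicalSpace X]
    (Q : Set X) : Prop :=
  ∃ (P : Set X) (a : X) (L : Submodule ℝ X),
    IsPolyhedral P ∧ IsClosed (L : Set X) ∧ Q = P ∩ (a +ᵥ (L : Set X))

def normalCone {X : Type*} [AddCommGroup X] [Module ℝ X] [TopologicalSpace X]
    (Ω : Set X) (xb : X) : Set (X →L[ℝ] ℝ) :=
  {f | ∀ x ∈ Ω, f (x - xb) ≤ 0}

def gph {X Y : Type*} (F : X → Set Y) : Set (X × Y) := {p | p.2 ∈ F p.1}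

def coderiv {X Y : Type*} [AddCommGroup X] [Module ℝ X] [TopologicalSpace X]
    [AddCommGroup Y] [Module ℝ Y] [TopologicalSpace Y]
    (F : X → Set Y) (xb : X) (yb : Y) (v : Y →L[ℝ] ℝ) : Set (X →L[ℝ] ℝ) :=
  {u | ∀ x : X, ∀ y ∈ F x, u (x - xb) - v (y - yb) ≤ 0}

def epi {X : Type*} (f : X → EReal) : Set (X × ℝ) := {p | f p.1 ≤ (p.2 : EReal)}

def subdiff {X : Type*} [AddCommGroup X] [Module ℝ X] [TopologicalSpace X]
    (f : X → EReal) (xb : X) : Set (X →L[ℝ] ℝ) :=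
  {g | ∀ x : X, ((g (x - xb) : ℝ) : EReal) + f xb ≤ f x}

def singSubdiff {X : Type*} [AddCommGroup X] [Module ℝ X] [TopologicalSpace X]
    (f : X → EReal) (xb : X) : Set (X →L[ℝ] ℝ) :=
  {g | ∀ x : X, ∀ α : ℝ, f x ≤ (α : EReal) → g (x - xb) ≤ 0}

variable {X : Type*} [AddCommGroup X] [Module ℝ X] [TopologicalSpace X]
  [IsTopologicalAddGroup X] [ContinuousSMul ℝ X] [LocallyConvexSpace ℝ X] [T2Space X]
variable {Y : Type*} [AddCommGroup Y] [Module ℝ Y] [TopologicalSpace Y]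
  [IsTopologicalAddGroup Y] [ContinuousSMul ℝ Y] [LocallyConvexSpace ℝ Y] [T2Space Y]
variable {Z : Type*} [AddCommGroup Z] [Module ℝ Z] [TopologicalSpace Z]
  [IsTopologicalAddGroup Z] [ContinuousSMul ℝ Z] [LocallyConvexSpace ℝ Z] [T2Space Z]


theorem farkas_aux {X : Type*} [AddCommGroup X] [Module ℝ X] [TopologicalSpace X] :
    ∀ (n : ℕ) (f : Fin n → X →L[ℝ] ℝ) (g : X →L[ℝ] ℝ),
    (∀ x, (∀ i, f i x ≤ 0) → g x ≤ 0) →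
    ∃ c : Fin n → ℝ, (∀ i, 0 ≤ c i) ∧ g = ∑ i, c i • f i := by
  intro n
  induction n with
  | zero =>
    intro f g h
    refine ⟨fun i => 0, fun i => le_rfl, ?_⟩
    ext x
    have h1 : g x ≤ 0 := h x (fun i => i.elim0)
    have h2 : g (-x) ≤ 0 := h (-x) (fun i => i.elim0)
    simp only [map_neg] at h2
    simp only [Finset.univ_eq_empty, Finset.sum_empty, ContinuousLinearMap.zero_apply]
    linarith
  | succ n ih =>
    intro f g h
    set f' : Fin n → X →L[ℝ] ℝ := fun i => f i.castSucc with hf'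
    set fl : X →L[ℝ] ℝ := f (Fin.last n) with hfl
    by_cases hc : ∀ x, (∀ i : Fin n, f' i x ≤ 0) → g x ≤ 0
    · obtain ⟨c, hc0, hceq⟩ := ih f' g hc
      refine ⟨Fin.snoc c 0, ?_, ?_⟩
      · intro i
        refine Fin.lastCases ?_ ?_ i
        · simp
        · intro j; simpa using hc0 j
      · rw [Fin.sum_univ_castSucc]
        simp [hceq, hf']
    · push_neg at hc
      obtain ⟨z, hz1, hz2⟩ := hc
      have hflz : 0 < fl z := by
        by_contra hle
        push_neg at hle
        have := h z (fun i => Fin.lastCases hle (fun j => hz1 j) i)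
        linarith
      set w : X := (fl z)⁻¹ • z with hw
      have hflw : fl w = 1 := by
        simp [hw, map_smul, smul_eq_mul, inv_mul_cancel₀ (ne_of_gt hflz)]
      have hf'w : ∀ i, f' i w ≤ 0 := by
        intro i
        have : (0:ℝ) ≤ (fl z)⁻¹ := le_of_lt (inv_pos.mpr hflz)
        simpa [hw, map_smul, smul_eq_mul] using mul_nonpos_of_nonneg_of_nonpos this (hz1 i)
      have hgw : 0 < g w := by
        have : g w = (fl z)⁻¹ * g z := by simp [hw, map_smul, smul_eq_mul]
        rw [this]
        exact mul_pos (inv_pos.mpr hflz) hz2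
      set F : Fin n → X →L[ℝ] ℝ := fun i => f' i - (f' i w) • fl with hF
      set G : X →L[ℝ] ℝ := g - (g w) • fl with hG
      have key : ∀ x, (∀ i, F i x ≤ 0) → G x ≤ 0 := by
        intro x hx
        set x' : X := x - (fl x) • w with hx'
        have hfx' : ∀ j : Fin (n+1), f j x' ≤ 0 := by
          intro j
          refine Fin.lastCases ?_ ?_ j
          · simp [hx', map_sub, map_smul, smul_eq_mul, hflw, ← hfl]
          · intro i
            have := hx i
            simpa [hx', hF, map_sub, map_smul, smul_eq_mul, mul_comm] using this
        have := h x' hfx'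
        have hGx : G x = g x' := by
          simp [hG, hx', map_sub, map_smul, smul_eq_mul, mul_comm]
        linarith [hGx ▸ this]
      obtain ⟨c, hc0, hceq⟩ := ih F G key
      refine ⟨Fin.snoc c (g w - ∑ i, c i * f' i w), ?_, ?_⟩
      · intro i
        refine Fin.lastCases ?_ ?_ i
        · simp only [Fin.snoc_last]
          have : ∑ i, c i * f' i w ≤ 0 :=
            Finset.sum_nonpos (fun i _ => mul_nonpos_of_nonneg_of_nonpos (hc0 i) (hf'w i))
          linarith
        · intro j; simpa using hc0 j
      · ext x
        have hGx := congrArg (fun (T : X →L[ℝ] ℝ) => T x) hceq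
        simp only [hG, hF, ContinuousLinearMap.sub_apply, ContinuousLinearMap.smul_apply,
          ContinuousLinearMap.sum_apply, smul_eq_mul] at hGx
        rw [Fin.sum_univ_castSucc]
        simp only [ContinuousLinearMap.add_apply, ContinuousLinearMap.sum_apply,
          ContinuousLinearMap.smul_apply, Fin.snoc_castSucc, Fin.snoc_last, smul_eq_mul]
        have hsum : ∑ i, c i * (f' i x - f' i w * fl x)
            = ∑ i, c i * f' i x - (∑ i, c i * f' i w) * fl x := by
          rw [Finset.sum_mul, ← Finset.sum_sub_distrib]
          congr 1; ext i; ring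
        rw [hsum] at hGx
        have : (fl : X →L[ℝ] ℝ) x = f (Fin.last n) x := rfl
        rw [← this]
        have : ∀ i : Fin n, (f i.castSucc) x = f' i x := fun i => rfl
        simp only [this]
        linarith


theorem normalCone_polyhedron_eq_cone_active
    (m : ℕ) (xs : Fin m → X →L[ℝ] ℝ) (α : Fin m → ℝ)
    (P : Set X) (hP : P = {x : X | ∀ i, xs i x ≤ α i})
    (xb : X) (hxb : xb ∈ P) :
    normalCone P xb =
      {g : X →L[ℝ] ℝ | ∃ c : Fin m → ℝ, (∀ i, 0 ≤ c i) ∧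
        (∀ i, xs i xb ≠ α i → c i = 0) ∧ g = ∑ i, c i • xs i} := by
  subst hP
  ext g
  constructor
  · intro hg
    -- modified family
    classical
    set h : Fin m → X →L[ℝ] ℝ := fun i => if xs i xb = α i then xs i else 0 with hh
    have premise : ∀ d, (∀ i, h i d ≤ 0) → g d ≤ 0 := by
      intro d hd
      -- active constraints have xs i d ≤ 0
      have hact : ∀ i, xs i xb = α i → xs i d ≤ 0 := by
        intro i hi
        have := hd i
        simpa [hh, hi] using this
      have hslack : ∀ i, xs i xb ≠ α i → xs i xb < α i :=
        fun i hi => lt_of_le_of_ne (hxb i) hi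
      set s : Fin m → ℝ := fun i =>
        if xs i xb = α i then 1 else if xs i d ≤ 0 then 1
          else (α i - xs i xb) / (xs i d) with hs
      have hspos : ∀ i, 0 < s i := by
        intro i
        simp only [hs]
        split_ifs with h1 h2
        · exact one_pos
        · exact one_pos
        · push_neg at h2
          exact div_pos (by linarith [hslack i h1]) h2
      set T : Finset ℝ := insert 1 (Finset.image s Finset.univ) with hT
      have hTne : T.Nonempty := ⟨1, Finset.mem_insert_self _ _⟩
      set t : ℝ := T.min' hTne with ht
      have htpos : 0 < t := by
        have : t ∈ T := Finset.min'_mem _ _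
        rw [hT] at this
        rcases Finset.mem_insert.mp this with h1 | h1
        · rw [h1]; exact one_pos
        · obtain ⟨i, _, hi⟩ := Finset.mem_image.mp h1
          rw [← hi]; exact hspos i
      have htle : ∀ i, t ≤ s i := fun i =>
        Finset.min'_le _ _ (Finset.mem_insert_of_mem (Finset.mem_image_of_mem s (Finset.mem_univ i)))
      have hmem : xb + t • d ∈ {x : X | ∀ i, xs i x ≤ α i} := by
        intro i
        simp only [map_add, map_smul, smul_eq_mul]
        by_cases h1 : xs i xb = α i
        · have := hact i h1
          nlinarith
        · by_cases h2 : xs i d ≤ 0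
          · nlinarith [hxb i]
          · push_neg at h2
            have hts : t ≤ (α i - xs i xb) / (xs i d) := by
              have := htle i
              simpa [hs, h1, not_le.mpr h2] using this
            have : t * xs i d ≤ α i - xs i xb := by
              rw [le_div_iff₀ h2] at hts
              linarith
            linarith
      have := hg _ hmem
      simp only [add_sub_cancel_left, map_smul, smul_eq_mul] at this
      nlinarith
    obtain ⟨c, hc0, hceq⟩ := farkas_aux m h g premise
    refine ⟨fun i => if xs i xb = α i then c i else 0, ?_, ?_, ?_⟩
    · intro i; by_cases hi : xs i xb = α i <;> simp [hi, hc0 i]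
    · intro i hi; simp [hi]
    · rw [hceq]
      refine Finset.sum_congr rfl fun i _ => ?_
      simp only [hh]
      split_ifs <;> simp
  · rintro ⟨c, hc0, hcz, rfl⟩
    intro x hx
    simp only [ContinuousLinearMap.sum_apply, ContinuousLinearMap.smul_apply, smul_eq_mul]
    refine Finset.sum_nonpos fun i _ => ?_
    by_cases hi : xs i xb = α i
    · have : xs i (x - xb) ≤ 0 := by
        rw [map_sub, hi]
        linarith [hx i]
      exact mul_nonpos_of_nonneg_of_nonpos (hc0 i) this
    · simp [hcz i hi]
end

section
/- Let f₁ : X → (−∞, ∞] be a polyhedral convex function and f₂ : X → (−∞, ∞] a generalized polyhedral convex function. Then ∂(f₁ + f₂)(x̄) = ∂f₁(x̄) + ∂f₂(x̄) for every x̄ ∈ dom(f₁) ∩ dom(f₂). -/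
open Set Pointwise

variable {X : Type*} [AddCommGroup X] [Module ℝ X] [TopologicalSpace X]
  [IsTopologicalAddGroup X] [ContinuousSMul ℝ X] [LocallyConvexSpace ℝ X] [T2Space X]
variable {Y : Type*} [AddCommGroup Y] [Module ℝ Y] [TopologicalSpace Y]
  [IsTopologicalAddGroup Y] [ContinuousSMul ℝ Y] [LocallyConvexSpace ℝ Y] [T2Space Y]
variable {Z : Type*} [AddCommGroup Z] [Module ℝ Z] [TopologicalSpace Z]
  [IsTopologicalAddGroup Z] [ContinuousSMul ℝ Z] [LocallyConvexSpace ℝ Z] [T2Space Z]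

private lemma exists_eps {ι : Type*} [Fintype ι] (c δ : ι → ℝ) (hδ : ∀ k, 0 ≤ δ k)
    (h : ∀ k, 0 < c k → 0 < δ k) : ∃ ε : ℝ, 0 < ε ∧ ∀ k, ε * c k ≤ δ k := by
  classical
  set s : Finset ℝ := insert 1 (Finset.univ.image (fun k => if 0 < c k then δ k / c k else 1))
    with hs
  have hne : s.Nonempty := ⟨1, Finset.mem_insert_self _ _⟩
  have hpos : 0 < s.min' hne := by
    rw [Finset.lt_min'_iff]
    intro b hb
    rw [hs, Finset.mem_insert] at hb
    rcases hb with rfl | hb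
    · norm_num
    · obtain ⟨k, -, rfl⟩ := Finset.mem_image.mp hb
      split_ifs with hk
      · exact div_pos (h k hk) hk
      · norm_num
  refine ⟨s.min' hne, hpos, ?_⟩
  intro k
  by_cases hk : 0 < c k
  · have hmem : δ k / c k ∈ s := by
      rw [hs]
      apply Finset.mem_insert_of_mem
      refine Finset.mem_image.mpr ⟨k, Finset.mem_univ k, ?_⟩
      simp [hk]
    have hle := s.min'_le _ hmem
    calc s.min' hne * c k ≤ δ k / c k * c k := by nlinarith
      _ = δ k := div_mul_cancel₀ _ (ne_of_gt hk)
  · push_neg at hk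
    nlinarith [hδ k]

private lemma farkas_fin {V : Type*} [AddCommGroup V] [Module ℝ V] :
    ∀ (m : ℕ) (u : Fin m → V →ₗ[ℝ] ℝ) (v : V →ₗ[ℝ] ℝ),
      (∀ x, (∀ i, u i x ≤ 0) → v x ≤ 0) →
      ∃ lam : Fin m → ℝ, (∀ i, 0 ≤ lam i) ∧ ∀ x, v x = ∑ i, lam i * u i x
  | 0, u, v, h => by
    refine ⟨fun _ => 0, fun i => le_rfl, fun x => ?_⟩
    have h1 := h x (fun i => i.elim0)
    have h2 := h (-x) (fun i => i.elim0)
    rw [map_neg] at h2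
    simp only [Finset.univ_eq_empty, Finset.sum_empty]
    linarith
  | (m+1), u, v, h => by
    classical
    by_cases hc : ∀ x, (∀ i : Fin m, u i.castSucc x ≤ 0) → v x ≤ 0
    · obtain ⟨lam, hlam, heq⟩ := farkas_fin m (fun i => u i.castSucc) v hc
      refine ⟨Fin.snoc lam 0, ?_, ?_⟩
      · intro i
        induction i using Fin.lastCases with
        | last => simp
        | cast i => simpa using hlam i
      · intro x
        rw [Fin.sum_univ_castSucc]
        simp only [Fin.snoc_castSucc, Fin.snoc_last, zero_mul, add_zero]
        exact heq x
    · push_neg at hc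
      obtain ⟨x₀, hx₀, hvx₀⟩ := hc
      have hcpos : 0 < u (Fin.last m) x₀ := by
        by_contra hle
        push_neg at hle
        have hall : ∀ i : Fin (m+1), u i x₀ ≤ 0 := by
          intro i
          induction i using Fin.lastCases with
          | last => exact hle
          | cast i => exact hx₀ i
        linarith [h x₀ hall]
      set c := u (Fin.last m) x₀ with hcdef
      have hcne : c ≠ 0 := ne_of_gt hcpos
      set u' : Fin m → V →ₗ[ℝ] ℝ :=
        fun i => u i.castSucc - (u i.castSucc x₀ / c) • u (Fin.last m) with hu'
      set v' : V →ₗ[ℝ] ℝ := v - (v x₀ / c) • u (Fin.last m) with hv'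
      have happ : ∀ i x, u' i x = u i.castSucc x - u i.castSucc x₀ / c * u (Fin.last m) x := by
        intro i x; simp [hu', smul_eq_mul]
      have hvapp : ∀ x, v' x = v x - v x₀ / c * u (Fin.last m) x := by
        intro x; simp [hv', smul_eq_mul]
      have hkey : ∀ x, (∀ i, u' i x ≤ 0) → v' x ≤ 0 := by
        intro x hx
        set y := x - (u (Fin.last m) x / c) • x₀ with hy
        have hall : ∀ i : Fin (m+1), u i y ≤ 0 := by
          intro i
          induction i using Fin.lastCases with
          | last =>
            simp only [hy, map_sub, map_smul, smul_eq_mul, ← hcdef]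
            field_simp
            simp
          | cast i =>
            have h1 := hx i
            rw [happ i] at h1
            simp only [hy, map_sub, map_smul, smul_eq_mul]
            have : u (Fin.last m) x / c * u i.castSucc x₀
                = u i.castSucc x₀ / c * u (Fin.last m) x := by ring
            rw [this]
            exact h1
        have hvy := h y hall
        rw [hvapp]
        simp only [hy, map_sub, map_smul, smul_eq_mul] at hvy
        have : u (Fin.last m) x / c * v x₀ = v x₀ / c * u (Fin.last m) x := by ring
        linarith
      obtain ⟨lam, hlam, heq⟩ := farkas_fin m u' v' hkey
      have hS : ∑ i, lam i * u i.castSucc x₀ ≤ 0 :=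
        Finset.sum_nonpos fun i _ => mul_nonpos_of_nonneg_of_nonpos (hlam i) (hx₀ i)
      set cm : ℝ := (v x₀ - ∑ i, lam i * u i.castSucc x₀) / c with hcm
      have hcm0 : 0 ≤ cm := le_of_lt (div_pos (by linarith) hcpos)
      refine ⟨Fin.snoc lam cm, ?_, ?_⟩
      · intro i
        induction i using Fin.lastCases with
        | last => simpa using hcm0
        | cast i => simpa using hlam i
      · intro x
        have hx' := heq x
        have hexp : ∑ i, lam i * u' i x
            = ∑ i, lam i * u i.castSucc x
              - (∑ i, lam i * u i.castSucc x₀) * (u (Fin.last m) x / c) := by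
          rw [Finset.sum_mul, ← Finset.sum_sub_distrib]
          apply Finset.sum_congr rfl
          intro i _
          rw [happ i]
          ring
        rw [hexp, hvapp] at hx'
        rw [Fin.sum_univ_castSucc]
        simp only [Fin.snoc_castSucc, Fin.snoc_last, hcm]
        have hc2 : c ≠ 0 := hcne
        field_simp at hx' ⊢
        linarith

private lemma farkas {V : Type*} [AddCommGroup V] [Module ℝ V] {ι : Type*} [Fintype ι]
    (u : ι → V →ₗ[ℝ] ℝ) (v : V →ₗ[ℝ] ℝ)
    (h : ∀ x, (∀ i, u i x ≤ 0) → v x ≤ 0) :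
    ∃ lam : ι → ℝ, (∀ i, 0 ≤ lam i) ∧ ∀ x, v x = ∑ i, lam i * u i x := by
  classical
  let e := Fintype.equivFin ι
  obtain ⟨lam, h1, h2⟩ := farkas_fin (Fintype.card ι) (fun k => u (e.symm k)) v
    (fun x hx => h x (fun i => by simpa using hx (e i)))
  refine ⟨fun i => lam (e i), fun i => h1 _, fun x => ?_⟩
  rw [h2 x]
  exact (Fintype.sum_equiv e (fun i => lam (e i) * u i x)
    (fun k => lam k * u (e.symm k) x) (fun i => by simp)).symm

theorem subdifferential_sum_rule
    (f₁ f₂ : X → EReal) (hbot₁ : ∀ x, f₁ x ≠ ⊥) (hbot₂ : ∀ x, f₂ x ≠ ⊥)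
    (hf₁ : IsPolyhedral (epi f₁)) (hf₂ : IsGPolyhedral (epi f₂))
    (xb : X) (hdom₁ : f₁ xb ≠ ⊤) (hdom₂ : f₂ xb ≠ ⊤) :
    subdiff (fun x => f₁ x + f₂ x) xb = subdiff f₁ xb + subdiff f₂ xb := by
  classical
  obtain ⟨m, u, α, hepi1⟩ := hf₁
  obtain ⟨P, a, L, hPpoly, hLcl, hepi2⟩ := hf₂
  obtain ⟨n, w, β, rfl⟩ := hPpoly
  set s₁ := (f₁ xb).toReal with hs₁def
  set s₂ := (f₂ xb).toReal with hs₂def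
  have hfs₁ : f₁ xb = ((s₁ : ℝ) : EReal) := (EReal.coe_toReal hdom₁ (hbot₁ xb)).symm
  have hfs₂ : f₂ xb = ((s₂ : ℝ) : EReal) := (EReal.coe_toReal hdom₂ (hbot₂ xb)).symm
  have hmem1 : ∀ i, u i (xb, s₁) ≤ α i := by
    have h0 : (xb, s₁) ∈ epi f₁ := le_of_eq hfs₁
    rw [hepi1] at h0; exact h0
  have hmem2epi : (xb, s₂) ∈ epi f₂ := le_of_eq hfs₂
  rw [hepi2] at hmem2epi
  have hmem2P : ∀ j, w j (xb, s₂) ≤ β j := hmem2epi.1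
  have hmem2L : (xb, s₂) ∈ a +ᵥ (L : Set (X × ℝ)) := hmem2epi.2
  apply Set.Subset.antisymm
  · intro g hg
    simp only [subdiff, Set.mem_setOf_eq] at hg
    -- master inequality
    have master : ∀ x t₁ t₂, (x, t₁) ∈ epi f₁ → (x, t₂) ∈ epi f₂ →
        g (x - xb) + (s₁ + s₂) ≤ t₁ + t₂ := by
      intro x t₁ t₂ h1 h2
      have hx := hg x
      have h3 : f₁ x + f₂ x ≤ ((t₁ : EReal) + (t₂ : EReal)) := add_le_add h1 h2
      have h4 := le_trans hx h3
      rw [hfs₁, hfs₂] at h4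
      exact_mod_cast h4
    -- the big module M ≤ X × ℝ × ℝ
    let M : Submodule ℝ (X × ℝ × ℝ) :=
      { carrier := {p | (p.1, p.2.2) ∈ L}
        add_mem' := fun hp hq => L.add_mem hp hq
        zero_mem' := L.zero_mem
        smul_mem' := fun c p hp => L.smul_mem c hp }
    let pr1 : (X × ℝ × ℝ) →ₗ[ℝ] X × ℝ :=
      (LinearMap.fst ℝ X (ℝ × ℝ)).prod ((LinearMap.fst ℝ ℝ ℝ).comp (LinearMap.snd ℝ X (ℝ × ℝ)))
    let pr2 : (X × ℝ × ℝ) →ₗ[ℝ] X × ℝ :=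
      (LinearMap.fst ℝ X (ℝ × ℝ)).prod ((LinearMap.snd ℝ ℝ ℝ).comp (LinearMap.snd ℝ X (ℝ × ℝ)))
    let Φ : ↥M →ₗ[ℝ] ℝ :=
      (((g : X →ₗ[ℝ] ℝ).comp (LinearMap.fst ℝ X (ℝ × ℝ)) -
        (LinearMap.fst ℝ ℝ ℝ).comp (LinearMap.snd ℝ X (ℝ × ℝ))) -
        (LinearMap.snd ℝ ℝ ℝ).comp (LinearMap.snd ℝ X (ℝ × ℝ))).comp M.subtype
    let F : ({i : Fin m // u i (xb, s₁) = α i} ⊕ {j : Fin n // w j (xb, s₂) = β j}) →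
        ↥M →ₗ[ℝ] ℝ :=
      Sum.elim
        (fun i => (((u i.1 : (X × ℝ) →ₗ[ℝ] ℝ)).comp pr1).comp M.subtype)
        (fun j => (((w j.1 : (X × ℝ) →ₗ[ℝ] ℝ)).comp pr2).comp M.subtype)
    have hFar : ∀ d : ↥M, (∀ k, F k d ≤ 0) → Φ d ≤ 0 := by
      rintro ⟨⟨dx, d1, d2⟩, hd⟩ hk
      have hd' : (dx, d2) ∈ L := hd
      obtain ⟨ε, hε, hεle⟩ := exists_eps
        (Sum.elim (fun i : Fin m => u i (dx, d1)) (fun j : Fin n => w j (dx, d2)))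
        (Sum.elim (fun i => α i - u i (xb, s₁)) (fun j => β j - w j (xb, s₂)))
        (by rintro (i | j)
            · simpa using sub_nonneg.mpr (hmem1 i)
            · simpa using sub_nonneg.mpr (hmem2P j))
        (by rintro (i | j) hpos
            · simp only [Sum.elim_inl] at hpos ⊢
              rcases lt_or_eq_of_le (hmem1 i) with h' | h'
              · linarith
              · have := hk (Sum.inl ⟨i, h'⟩)
                simp only [F, Sum.elim_inl, LinearMap.comp_apply, Submodule.subtype_apply,
                  LinearMap.prod_apply, ContinuousLinearMap.coe_coe] at this
                exact absurd hpos (not_lt.mpr this)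
            · simp only [Sum.elim_inr] at hpos ⊢
              rcases lt_or_eq_of_le (hmem2P j) with h' | h'
              · linarith
              · have := hk (Sum.inr ⟨j, h'⟩)
                simp only [F, Sum.elim_inr, LinearMap.comp_apply, Submodule.subtype_apply,
                  LinearMap.prod_apply, ContinuousLinearMap.coe_coe] at this
                exact absurd hpos (not_lt.mpr this))
      -- feasible point
      have hin1 : (xb + ε • dx, s₁ + ε * d1) ∈ epi f₁ := by
        rw [hepi1]
        intro i
        have e1 : ((xb + ε • dx, s₁ + ε * d1) : X × ℝ) = (xb, s₁) + ε • (dx, d1) := by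
          simp [Prod.ext_iff, smul_eq_mul]
        have := hεle (Sum.inl i)
        simp only [Sum.elim_inl] at this
        rw [e1, map_add, map_smul, smul_eq_mul]
        linarith
      have hin2 : (xb + ε • dx, s₂ + ε * d2) ∈ epi f₂ := by
        rw [hepi2]
        constructor
        · intro j
          have e1 : ((xb + ε • dx, s₂ + ε * d2) : X × ℝ) = (xb, s₂) + ε • (dx, d2) := by
            simp [Prod.ext_iff, smul_eq_mul]
          have := hεle (Sum.inr j)
          simp only [Sum.elim_inr] at this
          rw [e1, map_add, map_smul, smul_eq_mul]
          linarith
        · obtain ⟨l, hl, hal⟩ := hmem2L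
          refine ⟨l + ε • (dx, d2), L.add_mem hl (L.smul_mem ε hd'), ?_⟩
          have : a +ᵥ l = (xb, s₂) := hal
          simp only [vadd_eq_add] at this ⊢
          rw [← add_assoc, this]
          simp [Prod.ext_iff, smul_eq_mul]
      have hm := master (xb + ε • dx) (s₁ + ε * d1) (s₂ + ε * d2) hin1 hin2
      rw [add_sub_cancel_left, map_smul, smul_eq_mul] at hm
      show g dx - d1 - d2 ≤ 0
      nlinarith
    obtain ⟨lam, hlam, heq⟩ := farkas F Φ hFar
    -- pointwise form of the decomposition
    have heval : ∀ (dx : X) (d1 d2 : ℝ) (hd : (dx, d2) ∈ L),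
        g dx - d1 - d2 =
          (∑ i : {i : Fin m // u i (xb, s₁) = α i}, lam (Sum.inl i) * u i.1 (dx, d1)) +
          ∑ j : {j : Fin n // w j (xb, s₂) = β j}, lam (Sum.inr j) * w j.1 (dx, d2) := by
      intro dx d1 d2 hd
      have := heq ⟨(dx, d1, d2), hd⟩
      rw [Fintype.sum_sum_type] at this
      simpa [Φ, F, pr1, pr2] using this
    -- coefficient identity for the t₁ slot
    have hb : ∑ i : {i : Fin m // u i (xb, s₁) = α i}, lam (Sum.inl i) * u i.1 (0, 1) = -1 := by
      have h0 : ((0 : X), (0 : ℝ)) ∈ L := L.zero_mem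
      have hw0 : ∀ j : {j : Fin n // w j (xb, s₂) = β j}, w j.1 ((0 : X), (0 : ℝ)) = 0 :=
        fun j => map_zero (w j.1)
      have := heval 0 1 0 h0
      simp only [map_zero, hw0, mul_zero, Finset.sum_const_zero, add_zero] at this
      linarith [this]
    -- define g₁
    let g₁ : X →L[ℝ] ℝ := ∑ i : {i : Fin m // u i (xb, s₁) = α i},
      lam (Sum.inl i) • ((u i.1).comp (ContinuousLinearMap.inl ℝ X ℝ))
    have hg₁app : ∀ x : X, g₁ x = ∑ i : {i : Fin m // u i (xb, s₁) = α i},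
        lam (Sum.inl i) * u i.1 (x, 0) := by
      intro x
      simp [g₁, ContinuousLinearMap.sum_apply, smul_eq_mul]
    have hg₁mem : g₁ ∈ subdiff f₁ xb := by
      simp only [subdiff, Set.mem_setOf_eq]
      intro x
      by_cases hx : f₁ x = ⊤
      · rw [hx]; exact le_top
      · set t := (f₁ x).toReal with htdef
        have hft : f₁ x = (t : EReal) := (EReal.coe_toReal hx (hbot₁ x)).symm
        have hxe : ∀ i, u i (x, t) ≤ α i := by
          have h0 : (x, t) ∈ epi f₁ := le_of_eq hft
          rwa [hepi1] at h0
        have hsum : ∑ i : {i : Fin m // u i (xb, s₁) = α i},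
            lam (Sum.inl i) * (u i.1 (x, t) - u i.1 (xb, s₁)) ≤ 0 := by
          apply Finset.sum_nonpos
          intro i _
          apply mul_nonpos_of_nonneg_of_nonpos (hlam _)
          rw [i.2]
          linarith [hxe i.1]
        have hdiff : ∀ i : Fin m, u i (x, t) - u i (xb, s₁)
            = u i (x - xb, 0) + (t - s₁) * u i (0, 1) := by
          intro i
          have e1 : ((x, t) : X × ℝ) = (xb, s₁) + (x - xb, (0 : ℝ)) + (t - s₁) • ((0 : X), (1 : ℝ)) := by
            simp [Prod.ext_iff, smul_eq_mul]
          rw [e1, map_add, map_add, map_smul, smul_eq_mul]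
          ring
        have hfin : g₁ (x - xb) ≤ t - s₁ := by
          have e1 : ∑ i : {i : Fin m // u i (xb, s₁) = α i},
              lam (Sum.inl i) * (u i.1 (x, t) - u i.1 (xb, s₁))
              = g₁ (x - xb) + (t - s₁) *
                ∑ i : {i : Fin m // u i (xb, s₁) = α i}, lam (Sum.inl i) * u i.1 (0, 1) := by
            rw [hg₁app, Finset.mul_sum, ← Finset.sum_add_distrib]
            apply Finset.sum_congr rfl
            intro i _
            rw [hdiff i.1]
            ring
          rw [e1, hb] at hsum
          linarith
        rw [hfs₁, hft]
        have h' : g₁ (x - xb) + s₁ ≤ t := by linarith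
        exact_mod_cast h'
    have hg₂mem : g - g₁ ∈ subdiff f₂ xb := by
      simp only [subdiff, Set.mem_setOf_eq]
      intro x
      by_cases hx : f₂ x = ⊤
      · rw [hx]; exact le_top
      · set t := (f₂ x).toReal with htdef
        have hft : f₂ x = (t : EReal) := (EReal.coe_toReal hx (hbot₂ x)).symm
        have hmemx : (x, t) ∈ epi f₂ := le_of_eq hft
        rw [hepi2] at hmemx
        obtain ⟨l₁, hl₁, hal₁⟩ := hmemx.2
        obtain ⟨l₂, hl₂, hal₂⟩ := hmem2L
        have hdL : (x - xb, t - s₂) ∈ L := by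
          have e1 : ((x - xb, t - s₂) : X × ℝ) = l₁ - l₂ := by
            have e2 : a + l₁ = (x, t) := hal₁
            have e3 : a + l₂ = (xb, s₂) := hal₂
            have : ((x, t) : X × ℝ) - (xb, s₂) = l₁ - l₂ := by
              rw [← e2, ← e3]; abel
            simpa using this
          rw [e1]; exact L.sub_mem hl₁ hl₂
        have hev := heval (x - xb) 0 (t - s₂) hdL
        have hsum2 : ∑ j : {j : Fin n // w j (xb, s₂) = β j},
            lam (Sum.inr j) * w j.1 (x - xb, t - s₂) ≤ 0 := by
          apply Finset.sum_nonpos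
          intro j _
          apply mul_nonpos_of_nonneg_of_nonpos (hlam _)
          have e1 : w j.1 (x - xb, t - s₂) = w j.1 (x, t) - w j.1 (xb, s₂) := by
            rw [← map_sub]
            rfl
          rw [e1, j.2]
          linarith [hmemx.1 j.1]
        rw [← hg₁app] at hev
        have hfin : (g - g₁) (x - xb) + s₂ ≤ t := by
          have := hev
          simp only [ContinuousLinearMap.sub_apply]
          linarith
        rw [hfs₂, hft]
        exact_mod_cast hfin
    have hgdec : g = g₁ + (g - g₁) := by abel
    rw [hgdec]
    exact Set.add_mem_add hg₁mem hg₂mem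
  · rintro g ⟨g₁, hg₁, g₂, hg₂, rfl⟩
    simp only [subdiff, Set.mem_setOf_eq] at hg₁ hg₂ ⊢
    intro x
    by_cases hx1 : f₁ x = ⊤
    · rw [hx1, EReal.top_add_of_ne_bot (hbot₂ x)]; exact le_top
    by_cases hx2 : f₂ x = ⊤
    · rw [hx2, EReal.add_top_of_ne_bot (hbot₁ x)]; exact le_top
    · have hft₁ : f₁ x = (((f₁ x).toReal : ℝ) : EReal) := (EReal.coe_toReal hx1 (hbot₁ x)).symm
      have hft₂ : f₂ x = (((f₂ x).toReal : ℝ) : EReal) := (EReal.coe_toReal hx2 (hbot₂ x)).symm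
      have h1 := hg₁ x
      have h2 := hg₂ x
      rw [hft₁, hfs₁] at h1
      rw [hft₂, hfs₂] at h2
      have h1' : g₁ (x - xb) + s₁ ≤ (f₁ x).toReal := by exact_mod_cast h1
      have h2' : g₂ (x - xb) + s₂ ≤ (f₂ x).toReal := by exact_mod_cast h2
      rw [hft₁, hft₂, hfs₁, hfs₂, ContinuousLinearMap.add_apply]
      norm_cast
      linarith
end
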